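/- At every point of the sub-manifold defined by γ_i − β_{p+1−i} = 0 for all i = 1, …, p, the gradient of the pseudospin expectation is tangent to that sub-manifold: if γ, β ∈ ℝ^p satisfy γ_i = β_{p+1−i} for every i, then for every i, (∂F/∂γ_i)(γ, β, θ) − (∂F/∂β_{p+1−i})(γ, β, θ) = 0. In particular, any critical point of the restriction of F to this sub-manifold is a critical point of F on ℝ^p × ℝ^p. -/

import Mathlib

open Matrix Complex Real

noncomputable section

def σx : Matrix (Fin 2) (Fin 2) ℂ := !![0, 1; 1, 0]

def σz : Matrix (Fin 2) (Fin 2) ℂ := !![1, 0; 0, -1]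

/-- The Bloch axis `n(θ) = cos θ · σz + sin θ · σx`. -/
def nvec (θ : ℝ) : Matrix (Fin 2) (Fin 2) ℂ :=
  (Real.cos θ : ℂ) • σz + (Real.sin θ : ℂ) • σx

/-- `U_B(β) = exp(−2iβ·σz)`. -/
def UB (β : ℝ) : Matrix (Fin 2) (Fin 2) ℂ :=
  NormedSpace.exp ((-2 * β * Complex.I) • σz)

/-- `U_C(γ,θ) = exp(−2iγ·n(θ))`. -/
def UC (γ θ : ℝ) : Matrix (Fin 2) (Fin 2) ℂ :=
  NormedSpace.exp ((-2 * γ * Complex.I) • nvec θ)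

/-- The level-`p` QAOA circuit `U(γ,β,θ) = U_B(β_p)·U_C(γ_p,θ)·⋯·U_B(β_1)·U_C(γ_1,θ)`. -/
def Uqaoa (p : ℕ) (γ β : Fin p → ℝ) (θ : ℝ) : Matrix (Fin 2) (Fin 2) ℂ :=
  ((List.ofFn fun i : Fin p => UB (β i) * UC (γ i) θ).reverse).prod

/-- The pseudospin expectation `F(γ,β,θ) = Re tr[n(θ)·U·σz·U†]`. -/
def Fps (p : ℕ) (γ β : Fin p → ℝ) (θ : ℝ) : ℝ :=
  (Matrix.trace (nvec θ * Uqaoa p γ β θ * σz * (Uqaoa p γ β θ)ᴴ)).re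

end
noncomputable section

lemma nvec_eq (θ : ℝ) : nvec θ = !![(Real.cos θ : ℂ), Real.sin θ; Real.sin θ, -Real.cos θ] := by
  unfold nvec σx σz
  ext i j
  fin_cases i <;> fin_cases j <;> simp

lemma nvec_mul_self (a : ℝ) : nvec a * nvec a = 1 := by
  rw [nvec_eq]
  ext i j
  fin_cases i <;> fin_cases j <;>
    · simp [Matrix.mul_apply, Fin.sum_univ_two, Matrix.one_apply]
      norm_cast
      nlinarith [Real.sin_sq_add_cos_sq a]

lemma nvec_conjTranspose (a : ℝ) : (nvec a)ᴴ = nvec a := by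
  rw [nvec_eq]
  ext i j
  fin_cases i <;> fin_cases j <;>
    simp [Matrix.conjTranspose_apply, ← Complex.ofReal_cos, ← Complex.ofReal_sin,
      Complex.conj_ofReal]

lemma σz_conjTranspose : σzᴴ = σz := by
  unfold σz; ext i j; fin_cases i <;> fin_cases j <;> simp [Matrix.conjTranspose_apply]

lemma R_sz_R (θ : ℝ) : nvec (θ/2) * σz * nvec (θ/2) = nvec θ := by
  have h2 : (2:ℝ) * (θ/2) = θ := by ring
  have hc := Real.cos_two_mul (θ/2)
  have hs := Real.sin_two_mul (θ/2)
  rw [h2] at hc hs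
  rw [nvec_eq, nvec_eq]
  unfold σz
  ext i j
  fin_cases i <;> fin_cases j <;>
    · simp [Matrix.mul_apply, Fin.sum_univ_two, -Complex.ofReal_cos, -Complex.ofReal_sin]
      norm_cast
      nlinarith [Real.sin_sq_add_cos_sq (θ/2)]


lemma R_n_R (θ : ℝ) : nvec (θ/2) * nvec θ * nvec (θ/2) = σz := by
  rw [← R_sz_R θ]
  rw [show nvec (θ/2) * (nvec (θ/2) * σz * nvec (θ/2)) * nvec (θ/2)
      = (nvec (θ/2) * nvec (θ/2)) * σz * (nvec (θ/2) * nvec (θ/2)) by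
    simp only [mul_assoc]]
  rw [nvec_mul_self]
  simp

lemma R_inv (θ : ℝ) : (nvec (θ/2))⁻¹ = nvec (θ/2) :=
  Matrix.inv_eq_right_inv (nvec_mul_self _)

lemma R_isUnit (θ : ℝ) : IsUnit (nvec (θ/2)) :=
  ⟨⟨nvec (θ/2), nvec (θ/2), nvec_mul_self _, nvec_mul_self _⟩, rfl⟩

lemma R_exp_R (θ : ℝ) (A : Matrix (Fin 2) (Fin 2) ℂ) :
    nvec (θ/2) * NormedSpace.exp A * nvec (θ/2)
      = NormedSpace.exp (nvec (θ/2) * A * nvec (θ/2)) := by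
  have h := Matrix.exp_conj (nvec (θ/2)) A (R_isUnit θ)
  rw [R_inv] at h
  exact h.symm

lemma R_UB_R (θ β : ℝ) : nvec (θ/2) * UB β * nvec (θ/2) = UC β θ := by
  rw [UB, R_exp_R, UC]
  congr 1
  rw [Matrix.mul_smul, Matrix.smul_mul, R_sz_R]

lemma R_UC_R (θ γ : ℝ) : nvec (θ/2) * UC γ θ * nvec (θ/2) = UB γ := by
  rw [UC, R_exp_R, UB]
  congr 1
  rw [Matrix.mul_smul, Matrix.smul_mul, R_n_R]

lemma UB_conjTranspose (β : ℝ) : (UB β)ᴴ = UB (-β) := by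
  rw [UB, UB, ← Matrix.exp_conjTranspose]
  congr 1
  rw [Matrix.conjTranspose_smul, σz_conjTranspose]
  congr 1
  simp [Complex.ext_iff]

lemma UC_conjTranspose (γ θ : ℝ) : (UC γ θ)ᴴ = UC (-γ) θ := by
  rw [UC, UC, ← Matrix.exp_conjTranspose]
  congr 1
  rw [Matrix.conjTranspose_smul, nvec_conjTranspose]
  congr 1
  simp [Complex.ext_iff]

abbrev cmap (A : Matrix (Fin 2) (Fin 2) ℂ) : Matrix (Fin 2) (Fin 2) ℂ :=
  A.map (starRingEnd ℂ)

lemma cmap_eq (A : Matrix (Fin 2) (Fin 2) ℂ) : cmap A = (Aᴴ)ᵀ := by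
  ext i j; simp [Matrix.conjTranspose_apply]

lemma cmap_exp (A : Matrix (Fin 2) (Fin 2) ℂ) :
    cmap (NormedSpace.exp A) = NormedSpace.exp (cmap A) := by
  rw [cmap_eq, cmap_eq, ← Matrix.exp_conjTranspose, ← Matrix.exp_transpose]

lemma cmap_smul (c : ℂ) (A : Matrix (Fin 2) (Fin 2) ℂ) :
    cmap (c • A) = (starRingEnd ℂ c) • cmap A := by
  ext i j; simp

lemma cmap_σz : cmap σz = σz := by
  unfold σz; ext i j; fin_cases i <;> fin_cases j <;> simp

lemma cmap_nvec (a : ℝ) : cmap (nvec a) = nvec a := by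
  rw [nvec_eq]; ext i j
  fin_cases i <;> fin_cases j <;>
    simp [← Complex.ofReal_cos, ← Complex.ofReal_sin, Complex.conj_ofReal]

lemma cmap_UB (β : ℝ) : cmap (UB β) = UB (-β) := by
  rw [UB, UB, cmap_exp, cmap_smul, cmap_σz]
  congr 1
  simp only [_root_.map_mul, map_neg, Complex.conj_ofReal, Complex.conj_I, map_ofNat,
    Complex.ofReal_neg]
  ring_nf

lemma cmap_UC (γ θ : ℝ) : cmap (UC γ θ) = UC (-γ) θ := by
  rw [UC, UC, cmap_exp, cmap_smul, cmap_nvec]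
  congr 1
  simp only [_root_.map_mul, map_neg, Complex.conj_ofReal, Complex.conj_I, map_ofNat,
    Complex.ofReal_neg]
  ring_nf

lemma cmap_mul (A B : Matrix (Fin 2) (Fin 2) ℂ) : cmap (A * B) = cmap A * cmap B :=
  Matrix.map_mul

lemma cmap_list_prod (l : List (Matrix (Fin 2) (Fin 2) ℂ)) :
    cmap l.prod = (l.map cmap).prod := by
  induction l with
  | nil => simp [Matrix.map_one _ (map_zero _) (map_one _)]
  | cons a l ih => simp [cmap_mul, ih]

lemma R_list_prod (θ : ℝ) (l : List (Matrix (Fin 2) (Fin 2) ℂ)) :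
    nvec (θ/2) * l.prod * nvec (θ/2)
      = (l.map (fun A => nvec (θ/2) * A * nvec (θ/2))).prod := by
  induction l with
  | nil => simp [nvec_mul_self]
  | cons a l ih =>
      simp only [List.prod_cons, List.map_cons]
      calc nvec (θ/2) * (a * l.prod) * nvec (θ/2)
          = nvec (θ/2) * (a * (1 * l.prod)) * nvec (θ/2) := by rw [one_mul]
        _ = nvec (θ/2) * (a * ((nvec (θ/2) * nvec (θ/2)) * l.prod)) * nvec (θ/2) := by
              rw [nvec_mul_self]
        _ = (nvec (θ/2) * a * nvec (θ/2)) * (nvec (θ/2) * l.prod * nvec (θ/2)) := by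
              simp only [mul_assoc]
        _ = (nvec (θ/2) * a * nvec (θ/2)) *
              (List.map (fun A => nvec (θ/2) * A * nvec (θ/2)) l).prod := by rw [ih]

lemma ofFn_rev {α : Type*} : ∀ (n : ℕ) (f : Fin n → α),
    List.ofFn (fun i => f i.rev) = (List.ofFn f).reverse := by
  intro n
  induction n with
  | zero => intro f; simp
  | succ n ih =>
      intro f
      rw [List.ofFn_succ' f, List.ofFn_succ (f := fun i => f i.rev)]
      simp only [Fin.rev_succ]
      rw [ih (fun i => f i.castSucc), List.concat_eq_append, List.reverse_append]
      simp [Fin.rev_zero]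



lemma Uconj (p : ℕ) (γ β : Fin p → ℝ) (θ : ℝ) :
    nvec (θ/2) * Uqaoa p γ β θ * nvec (θ/2)
      = (Uqaoa p (fun k => -β k.rev) (fun k => -γ k.rev) θ)ᴴ := by
  unfold Uqaoa
  rw [R_list_prod, Matrix.conjTranspose_list_prod, List.map_reverse, List.map_reverse,
    List.reverse_reverse, List.map_ofFn, List.map_ofFn]
  beta_reduce
  rw [show ((fun A => nvec (θ/2) * A * nvec (θ/2)) ∘ fun i : Fin p => UB (β i) * UC (γ i) θ)
      = fun i : Fin p => UC (β i) θ * UB (γ i) by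
    funext i
    show nvec (θ/2) * (UB (β i) * UC (γ i) θ) * nvec (θ/2) = _
    calc nvec (θ/2) * (UB (β i) * UC (γ i) θ) * nvec (θ/2)
        = nvec (θ/2) * (UB (β i) * (1 * UC (γ i) θ)) * nvec (θ/2) := by rw [one_mul]
      _ = nvec (θ/2) * (UB (β i) * ((nvec (θ/2) * nvec (θ/2)) * UC (γ i) θ)) * nvec (θ/2) := by
            rw [nvec_mul_self]
      _ = (nvec (θ/2) * UB (β i) * nvec (θ/2)) * (nvec (θ/2) * UC (γ i) θ * nvec (θ/2)) := by
            simp only [mul_assoc]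
      _ = UC (β i) θ * UB (γ i) := by rw [R_UB_R, R_UC_R]]
  rw [show (conjTranspose ∘ fun i : Fin p => UB (-γ i.rev) * UC (-β i.rev) θ)
      = fun i : Fin p => UC (β i.rev) θ * UB (γ i.rev) by
    funext i
    show (UB (-γ i.rev) * UC (-β i.rev) θ)ᴴ = _
    rw [Matrix.conjTranspose_mul, UB_conjTranspose, UC_conjTranspose, neg_neg, neg_neg]]
  rw [← ofFn_rev p (fun i : Fin p => UC (β i) θ * UB (γ i))]

lemma Umap (p : ℕ) (γ β : Fin p → ℝ) (θ : ℝ) :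
    cmap (Uqaoa p γ β θ) = Uqaoa p (fun k => -γ k) (fun k => -β k) θ := by
  unfold Uqaoa
  rw [cmap_list_prod, List.map_reverse, List.map_ofFn]
  beta_reduce
  rw [show (cmap ∘ fun i : Fin p => UB (β i) * UC (γ i) θ)
      = fun i : Fin p => UB (-β i) * UC (-γ i) θ by
    funext i
    show cmap (UB (β i) * UC (γ i) θ) = _
    rw [cmap_mul, cmap_UB, cmap_UC]]

set_option maxHeartbeats 1000000 in
lemma FpsB (p : ℕ) (γ β : Fin p → ℝ) (θ : ℝ) :
    Fps p γ β θ = Fps p (fun k => -β k.rev) (fun k => -γ k.rev) θ := by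
  unfold Fps
  set R := nvec (θ/2) with hR
  set W := Uqaoa p (fun k => -β k.rev) (fun k => -γ k.rev) θ with hW
  have hRR : R * R = 1 := nvec_mul_self _
  have hU : Uqaoa p γ β θ = R * Wᴴ * R := by
    have h := Uconj p γ β θ
    calc Uqaoa p γ β θ = 1 * Uqaoa p γ β θ * 1 := by rw [one_mul, mul_one]
      _ = (R * R) * Uqaoa p γ β θ * (R * R) := by rw [hRR]
      _ = R * (R * Uqaoa p γ β θ * R) * R := by simp only [mul_assoc]
      _ = R * Wᴴ * R := by rw [h]
  have hUH : (Uqaoa p γ β θ)ᴴ = R * W * R := by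
    rw [hU, Matrix.conjTranspose_mul, Matrix.conjTranspose_mul, Matrix.conjTranspose_conjTranspose,
      hR, nvec_conjTranspose, mul_assoc]
  rw [hUH, hU]
  congr 1
  have hRnR : R * nvec θ * R = σz := R_n_R θ
  have hRsR : R * σz * R = nvec θ := R_sz_R θ
  calc Matrix.trace (nvec θ * (R * Wᴴ * R) * σz * (R * W * R))
      = Matrix.trace ((nvec θ * (R * Wᴴ * R) * σz * (R * W)) * R) := by
        simp only [mul_assoc]
    _ = Matrix.trace (R * (nvec θ * (R * Wᴴ * R) * σz * (R * W))) :=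
        Matrix.trace_mul_comm _ R
    _ = Matrix.trace ((R * nvec θ * R) * Wᴴ * (R * σz * R) * W) := by
        congr 1
        simp only [mul_assoc]
    _ = Matrix.trace (σz * Wᴴ * (nvec θ * W)) := by rw [hRnR, hRsR, mul_assoc]
    _ = Matrix.trace ((nvec θ * W) * (σz * Wᴴ)) := Matrix.trace_mul_comm _ _
    _ = Matrix.trace (nvec θ * W * σz * Wᴴ) := by simp only [mul_assoc]

lemma cmap_conjTranspose (A : Matrix (Fin 2) (Fin 2) ℂ) : cmap (Aᴴ) = (cmap A)ᴴ := by
  ext i j; simp [Matrix.conjTranspose_apply]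

lemma trace_cmap_re (M : Matrix (Fin 2) (Fin 2) ℂ) :
    (Matrix.trace (cmap M)).re = (Matrix.trace M).re := by
  have : Matrix.trace (cmap M) = (starRingEnd ℂ) (Matrix.trace M) := by
    simp [Matrix.trace, Matrix.diag, Matrix.map_apply, map_sum]
  rw [this, Complex.conj_re]

lemma FpsA (p : ℕ) (γ β : Fin p → ℝ) (θ : ℝ) :
    Fps p γ β θ = Fps p (fun k => -γ k) (fun k => -β k) θ := by
  have hM : cmap (nvec θ * Uqaoa p γ β θ * σz * (Uqaoa p γ β θ)ᴴ)
      = nvec θ * Uqaoa p (fun k => -γ k) (fun k => -β k) θ * σz *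
        (Uqaoa p (fun k => -γ k) (fun k => -β k) θ)ᴴ := by
    rw [cmap_mul, cmap_mul, cmap_mul, cmap_nvec, cmap_σz, Umap, cmap_conjTranspose, Umap]
  unfold Fps
  rw [← trace_cmap_re (nvec θ * Uqaoa p γ β θ * σz * (Uqaoa p γ β θ)ᴴ), hM]

lemma Fsym (p : ℕ) (γ β : Fin p → ℝ) (θ : ℝ) :
    Fps p γ β θ = Fps p (fun k => β k.rev) (fun k => γ k.rev) θ := by
  rw [FpsA, FpsB]
  simp only [neg_neg]


/-- On the sub-manifold `γ_i − β_{p+1−i} = 0`, the gradient of the pseudospin expectation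
is tangent to the sub-manifold: `∂F/∂γ_i − ∂F/∂β_{p+1−i} = 0` for every `i`. -/
theorem gradient_tangent_to_manifold_two
    (p : ℕ) (hp : 1 ≤ p) (θ : ℝ) (γ β : Fin p → ℝ)
    (h : ∀ i : Fin p, γ i = β (Fin.rev i)) (i : Fin p) :
    deriv (fun t => Fps p (Function.update γ i t) β θ) (γ i) -
      deriv (fun t => Fps p γ (Function.update β (Fin.rev i) t) θ) (β (Fin.rev i)) = 0 := by
  have key : (fun t => Fps p (Function.update γ i t) β θ)
      = fun t => Fps p γ (Function.update β (Fin.rev i) t) θ := by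
    funext t
    rw [Fsym]
    congr 1
    · funext j
      exact (h j).symm
    · funext j
      rcases eq_or_ne j (Fin.rev i) with rfl | hj
      · simp [Function.update_apply, Fin.rev_rev]
      · have hji : Fin.rev j ≠ i := fun hc => hj (by rw [← hc, Fin.rev_rev])
        rw [Function.update_apply, Function.update_apply, if_neg hji, if_neg hj,
          h (Fin.rev j), Fin.rev_rev]
  rw [key, h i, sub_self]
end
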